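/- Let the IFS {S_i}_{i∈I} satisfy the SSC, let p ∈ P with p_i > 0 for all i, let w ∈ P, and let γ ∈ Ω_w. Then the local dimension of μ_p at π(γ) exists and equals H(w,p)/χ(w). -/

import Mathlib

open MeasureTheory Metric Filter Set Topology
open scoped Classical

noncomputable section

/-- `ℝ^d` -/
abbrev Ed (d : ℕ) := EuclideanSpace ℝ (Fin d)

/-- The (topological) support of a measure. -/
def msupport {d : ℕ} (μ : Measure (Ed d)) : Set (Ed d) :=
  {x | ∀ ε > 0, 0 < μ (ball x ε)}

/-- The set of probability vectors indexed by `ι`. -/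
def probSet (ι : Type*) [Fintype ι] : Set (ι → ℝ) :=
  {p | (∀ i, 0 ≤ p i) ∧ ∑ i, p i = 1}

/-- Cross entropy `H(w,p) = Σ w_i log(1/p_i)`. -/
def crossEnt {ι : Type*} [Fintype ι] (w p : ι → ℝ) : ℝ := ∑ i, w i * Real.log (1 / p i)

/-- Entropy `H(w) = H(w,w)`. -/
def entropy {ι : Type*} [Fintype ι] (w : ι → ℝ) : ℝ := crossEnt w w

/-- Lyapunov exponent `χ(w) = Σ w_i log(1/r_i)`. -/
def lyap {ι : Type*} [Fintype ι] (r w : ι → ℝ) : ℝ := ∑ i, w i * Real.log (1 / r i)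

/-- For a finite word `w = i₁⋯iₙ`, the product `f_{i₁}⋯f_{iₙ}` (e.g. `r_𝚒` or `p_𝚒`). -/
def wprod {ι : Type*} (f : ι → ℝ) (w : List ι) : ℝ := (w.map f).prod

/-- For a finite word `w = i₁⋯iₙ`, the composition `S_{i₁} ∘ ⋯ ∘ S_{iₙ}`. -/
def Sword {ι : Type*} {d : ℕ} (S : ι → Ed d → Ed d) (w : List ι) (x : Ed d) : Ed d :=
  w.foldr (fun i y => S i y) x

/-- The local dimension of `μ` at `x` exists and equals `α`. -/
def HasLocDim {d : ℕ} (μ : Measure (Ed d)) (x : Ed d) (α : ℝ) : Prop :=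
  Tendsto (fun r : ℝ => Real.log (μ (closedBall x r)).toReal / Real.log r)
    (nhdsWithin 0 (Set.Ioi 0)) (nhds α)

/-- `G_μ(ρ,q)`: the supremum of `Σ μ(B(xᵢ,ρ))^q` over `2ρ`-separated subsets of `supp μ`. -/
def Gfun {d : ℕ} (μ : Measure (Ed d)) (ρ q : ℝ) : ℝ :=
  sSup {s | ∃ F : Finset (Ed d), (↑F : Set (Ed d)) ⊆ msupport μ ∧
    (∀ x ∈ F, ∀ y ∈ F, x ≠ y → 2 * ρ ≤ dist x y) ∧
    s = ∑ x ∈ F, (μ (closedBall x ρ)).toReal ^ q}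

/-- The `L^q`-spectrum `τ_μ(q) = liminf_{ρ→0} log G_μ(ρ,q) / log ρ`. -/
def tauLq {d : ℕ} (μ : Measure (Ed d)) (q : ℝ) : ℝ :=
  liminf (fun ρ => Real.log (Gfun μ ρ q) / Real.log ρ) (nhdsWithin 0 (Set.Ioo 0 1))


section Aux
variable {ι : Type*} {d : ℕ} {S : ι → Ed d → Ed d} {r : ι → ℝ}

lemma wprod_nil (f : ι → ℝ) : wprod f [] = 1 := rfl
lemma wprod_cons (f : ι → ℝ) (i : ι) (u : List ι) : wprod f (i :: u) = f i * wprod f u := by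
  simp [wprod]
lemma wprod_append (f : ι → ℝ) (u v : List ι) : wprod f (u ++ v) = wprod f u * wprod f v := by
  simp [wprod]
lemma wprod_pos {f : ι → ℝ} (hf : ∀ i, 0 < f i) (u : List ι) : 0 < wprod f u := by
  induction u with
  | nil => norm_num [wprod]
  | cons a u ih => rw [wprod_cons]; exact mul_pos (hf a) ih
lemma wprod_nonneg {f : ι → ℝ} (hf : ∀ i, 0 ≤ f i) (u : List ι) : 0 ≤ wprod f u := by
  induction u with
  | nil => norm_num [wprod]
  | cons a u ih => rw [wprod_cons]; exact mul_nonneg (hf a) ih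
lemma wprod_le_one {f : ι → ℝ} (hf : ∀ i, 0 ≤ f i) (hf1 : ∀ i, f i ≤ 1) (u : List ι) :
    wprod f u ≤ 1 := by
  induction u with
  | nil => simp [wprod]
  | cons a u ih =>
    rw [wprod_cons]
    calc f a * wprod f u ≤ 1 * 1 :=
          mul_le_mul (hf1 a) ih (wprod_nonneg hf u) zero_le_one
      _ = 1 := by ring
lemma wprod_le_pow {f : ι → ℝ} {c : ℝ} (hf : ∀ i, 0 ≤ f i) (hfc : ∀ i, f i ≤ c) (hc : 0 ≤ c)
    (u : List ι) : wprod f u ≤ c ^ u.length := by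
  induction u with
  | nil => simp [wprod]
  | cons a u ih =>
    rw [wprod_cons, List.length_cons, pow_succ, mul_comm (c ^ u.length) c]
    exact mul_le_mul (hfc a) ih (wprod_nonneg hf u) hc
lemma Sword_nil (S : ι → Ed d → Ed d) (x : Ed d) : Sword S [] x = x := rfl
lemma Sword_cons (S : ι → Ed d → Ed d) (i : ι) (u : List ι) (x : Ed d) :
    Sword S (i :: u) x = S i (Sword S u x) := rfl
lemma Sword_append (S : ι → Ed d → Ed d) (u v : List ι) (x : Ed d) :
    Sword S (u ++ v) x = Sword S u (Sword S v x) := by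
  simp [Sword, List.foldr_append]
lemma Sword_dist (hS : ∀ i x y, dist (S i x) (S i y) = r i * dist x y) (u : List ι) (x y : Ed d) :
    dist (Sword S u x) (Sword S u y) = wprod r u * dist x y := by
  induction u with
  | nil => simp [Sword_nil, wprod_nil]
  | cons a u ih => rw [Sword_cons, Sword_cons, hS, ih, wprod_cons, mul_assoc]
end Aux

section Freq
variable {ι : Type*}

lemma wprod_range_succ (f : ι → ℝ) (γ : ℕ → ι) (n : ℕ) :
    wprod f ((List.range (n+1)).map γ) = wprod f ((List.range n).map γ) * f (γ n) := by
  rw [List.range_succ, List.map_append, wprod_append]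
  simp [wprod]

lemma log_wprod_range {f : ι → ℝ} (hf : ∀ i, 0 < f i) (γ : ℕ → ι) (n : ℕ) :
    Real.log (wprod f ((List.range n).map γ)) = ∑ ℓ ∈ Finset.range n, Real.log (f (γ ℓ)) := by
  induction n with
  | zero => simp [wprod]
  | succ n ih =>
    rw [wprod_range_succ, Real.log_mul (wprod_pos hf _).ne' (hf _).ne', ih,
      Finset.sum_range_succ]

lemma freq_tendsto [Fintype ι] (γ : ℕ → ι) (w : ι → ℝ)
    (hγ : ∀ j : ι, Tendsto
      (fun n : ℕ => (((Finset.range n).filter (fun ℓ => γ ℓ = j)).card : ℝ) / n)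
      atTop (nhds (w j))) (g : ι → ℝ) :
    Tendsto (fun n : ℕ => (∑ ℓ ∈ Finset.range n, g (γ ℓ)) / n) atTop
      (nhds (∑ j, w j * g j)) := by
  have key : ∀ n : ℕ, (∑ ℓ ∈ Finset.range n, g (γ ℓ)) / n
      = ∑ j, (((Finset.range n).filter (fun ℓ => γ ℓ = j)).card : ℝ) / n * g j := by
    intro n
    rw [← Finset.sum_fiberwise' (Finset.range n) γ g, Finset.sum_div]
    refine Finset.sum_congr rfl fun j _ => ?_
    rw [Finset.sum_const, nsmul_eq_mul]; ring
  simp only [key]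
  exact tendsto_finset_sum _ fun j _ => (hγ j).mul_const (g j)
end Freq
section Meas
variable {d : ℕ} {ι : Type} [Fintype ι] [Nonempty ι]

lemma S_lipschitz {S : ι → Ed d → Ed d} {r : ι → ℝ} (hr : ∀ i, r i ∈ Set.Ioo (0:ℝ) 1)
    (hS : ∀ i x y, dist (S i x) (S i y) = r i * dist x y) (i : ι) :
    LipschitzWith ⟨r i, (hr i).1.le⟩ (S i) :=
  LipschitzWith.of_dist_le_mul fun x y => le_of_eq (hS i x y)

lemma mu_apply_eq {S : ι → Ed d → Ed d} {r : ι → ℝ} (hr : ∀ i, r i ∈ Set.Ioo (0:ℝ) 1)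
    (hS : ∀ i x y, dist (S i x) (S i y) = r i * dist x y)
    {p : ι → ℝ} {μ : Measure (Ed d)}
    (hμ : μ = ∑ i, ENNReal.ofReal (p i) • μ.map (S i))
    {A : Set (Ed d)} (hA : MeasurableSet A) :
    μ A = ∑ i, ENNReal.ofReal (p i) * μ (S i ⁻¹' A) := by
  conv_lhs => rw [hμ]
  rw [Measure.finset_sum_apply]
  refine Finset.sum_congr rfl fun i _ => ?_
  rw [Measure.smul_apply, smul_eq_mul,
    Measure.map_apply ((S_lipschitz hr hS i).continuous.measurable) hA]

lemma sum_ofReal_p_eq_one {p : ι → ℝ} (hp : ∀ i, 0 ≤ p i) (hp1 : ∑ i, p i = 1) :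
    ∑ i : ι, ENNReal.ofReal (p i) = 1 := by
  rw [← ENNReal.ofReal_sum_of_nonneg (fun i _ => hp i), hp1, ENNReal.ofReal_one]

lemma mu_K_eq_one {S : ι → Ed d → Ed d} {r : ι → ℝ} (hr : ∀ i, r i ∈ Set.Ioo (0:ℝ) 1)
    (hS : ∀ i x y, dist (S i x) (S i y) = r i * dist x y)
    {K : Set (Ed d)} (hKc : IsCompact K) (hKne : K.Nonempty)
    (hKinv : K = ⋃ i, S i '' K)
    {p : ι → ℝ} (hp : ∀ i, 0 ≤ p i) (hp1 : ∑ i, p i = 1)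
    {μ : Measure (Ed d)} [IsProbabilityMeasure μ]
    (hμ : μ = ∑ i, ENNReal.ofReal (p i) • μ.map (S i)) : μ K = 1 := by
  obtain ⟨c, hc⟩ := hKne
  obtain ⟨i0, -, hi0⟩ := Finset.exists_max_image Finset.univ r ⟨Classical.arbitrary ι, Finset.mem_univ _⟩
  set rmax := r i0 with hrmax_def
  have hrmax1 : rmax < 1 := (hr i0).2
  have hrmax0 : 0 < rmax := (hr i0).1
  have hrmax : ∀ i, r i ≤ rmax := fun i => hi0 i (Finset.mem_univ i)
  have hSK : ∀ i, S i '' K ⊆ K := fun i => by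
    intro x hx; rw [hKinv]; exact mem_iUnion.2 ⟨i, hx⟩
  -- main claim: for all large R, μ K ≥ μ (closedBall c R)
  have main : ∀ R : ℝ, diam K / (1 - rmax) ≤ R → μ (closedBall c R) ≤ μ K := by
    intro R hR
    have hR0 : 0 ≤ R := le_trans (div_nonneg diam_nonneg (by linarith)) hR
    have hstep : ∀ i, S i '' closedBall c R ⊆ closedBall c R := by
      rintro i y ⟨a, ha, rfl⟩
      rw [mem_closedBall] at ha ⊢
      have h1 : dist (S i a) c ≤ dist (S i a) (S i c) + dist (S i c) c := dist_triangle _ _ _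
      have h2 : dist (S i a) (S i c) = r i * dist a c := hS i a c
      have h3 : dist (S i c) c ≤ diam K :=
        dist_le_diam_of_mem hKc.isBounded (hSK i ⟨c, hc, rfl⟩) hc
      have h4 : r i * dist a c ≤ rmax * R :=
        mul_le_mul (hrmax i) ha dist_nonneg hrmax0.le
      have h5 : diam K ≤ (1 - rmax) * R := by
        rw [div_le_iff₀ (by linarith : (0:ℝ) < 1 - rmax)] at hR; nlinarith
      linarith
    set A : ℕ → Set (Ed d) := fun n => Nat.rec (closedBall c R) (fun _ An => ⋃ i, S i '' An) n
      with hA_def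
    have hA0 : A 0 = closedBall c R := rfl
    have hAsucc : ∀ n, A (n+1) = ⋃ i, S i '' A n := fun n => rfl
    have hAc : ∀ n, IsCompact (A n) := by
      intro n; induction n with
      | zero => exact isCompact_closedBall c R
      | succ n ih =>
        rw [hAsucc]
        exact isCompact_iUnion fun i => ih.image (S_lipschitz hr hS i).continuous
    have hAmono : ∀ n, A (n+1) ⊆ A n := by
      intro n; induction n with
      | zero =>
        rw [hAsucc, hA0]
        exact iUnion_subset fun i => hstep i
      | succ n ih =>
        rw [hAsucc (n+1)]
        exact iUnion_subset fun i =>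
          (image_mono ih).trans (by rw [hAsucc]; exact subset_iUnion (fun j => S j '' A n) i)
    have hAanti : Antitone A := antitone_nat_of_succ_le hAmono
    have hAmeas : ∀ n, μ (closedBall c R) ≤ μ (A n) := by
      intro n; induction n with
      | zero => rw [hA0]
      | succ n ih =>
        have h1 : μ (A (n+1)) = ∑ i, ENNReal.ofReal (p i) * μ (S i ⁻¹' A (n+1)) :=
          mu_apply_eq hr hS hμ (hAc (n+1)).isClosed.measurableSet
        have h2 : ∀ i, μ (A n) ≤ μ (S i ⁻¹' A (n+1)) := by
          intro i
          refine measure_mono ?_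
          intro a ha
          have : S i a ∈ A (n+1) := by
            rw [hAsucc]; exact mem_iUnion.2 ⟨i, mem_image_of_mem _ ha⟩
          exact this
        calc μ (closedBall c R) ≤ μ (A n) := ih
          _ = 1 * μ (A n) := (one_mul _).symm
          _ = (∑ i : ι, ENNReal.ofReal (p i)) * μ (A n) := by
              rw [sum_ofReal_p_eq_one hp hp1]
          _ = ∑ i, ENNReal.ofReal (p i) * μ (A n) := Finset.sum_mul ..
          _ ≤ ∑ i, ENNReal.ofReal (p i) * μ (S i ⁻¹' A (n+1)) :=
              Finset.sum_le_sum fun i _ => mul_le_mul_right (h2 i) _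
          _ = μ (A (n+1)) := h1.symm
    have hball : ∀ n, ∀ z ∈ A n, ∃ k ∈ K, dist z k ≤ rmax ^ n * R := by
      intro n; induction n with
      | zero => exact fun z hz => ⟨c, hc, by simpa [hA0] using hz⟩
      | succ n ih =>
        intro z hz
        rw [hAsucc] at hz
        obtain ⟨i, a, ha, rfl⟩ := mem_iUnion.1 hz
        obtain ⟨k, hk, hdk⟩ := ih a ha
        refine ⟨S i k, hSK i ⟨k, hk, rfl⟩, ?_⟩
        rw [hS]
        calc r i * dist a k ≤ rmax * (rmax ^ n * R) :=
              mul_le_mul (hrmax i) hdk dist_nonneg hrmax0.le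
          _ = rmax ^ (n+1) * R := by ring
    have hInter : (⋂ n, A n) ⊆ K := by
      intro z hz
      have hcl : z ∈ closure K := by
        rw [Metric.mem_closure_iff]
        intro ε hε
        obtain ⟨n, hn⟩ := exists_pow_lt_of_lt_one (div_pos hε (by linarith : (0:ℝ) < R + 1)) hrmax1
        have hn' : rmax ^ n * (R + 1) < ε := by
          rw [lt_div_iff₀ (by linarith : (0:ℝ) < R + 1)] at hn; exact hn
        obtain ⟨k, hk, hdk⟩ := hball n z (mem_iInter.1 hz n)
        refine ⟨k, hk, lt_of_le_of_lt hdk ?_⟩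
        nlinarith [pow_nonneg hrmax0.le n]
      rwa [hKc.isClosed.closure_eq] at hcl
    have hlim : Tendsto (fun n => μ (A n)) atTop (𝓝 (μ (⋂ n, A n))) :=
      tendsto_measure_iInter_atTop
        (fun n => (hAc n).isClosed.measurableSet.nullMeasurableSet) hAanti
        ⟨0, measure_ne_top μ _⟩
    exact (ge_of_tendsto' hlim hAmeas).trans (measure_mono hInter)
  refine le_antisymm prob_le_one ?_
  set R0 := max (diam K / (1 - rmax)) 0 with hR0_def
  have hseq : Tendsto (fun m : ℕ => μ (closedBall c (R0 + m))) atTop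
      (𝓝 (μ (⋃ m : ℕ, closedBall c (R0 + m)))) := by
    apply tendsto_measure_iUnion_atTop
    intro a b hab
    exact closedBall_subset_closedBall (by simp only [add_le_add_iff_left, Nat.cast_le]; exact hab)
  have huniv : (⋃ m : ℕ, closedBall c (R0 + m)) = univ := by
    refine eq_univ_of_forall fun z => mem_iUnion.2 ?_
    obtain ⟨m, hm⟩ := exists_nat_ge (dist z c)
    exact ⟨m, mem_closedBall.2 (le_trans hm (by simp [hR0_def, le_max_right]))⟩
  have h1 : μ (⋃ m : ℕ, closedBall c (R0 + m)) ≤ μ K :=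
    le_of_tendsto' hseq fun m => main _ (le_trans (le_max_left _ _) (le_add_of_nonneg_right (Nat.cast_nonneg m)))
  rwa [huniv, measure_univ] at h1

lemma mu_image_eq {S : ι → Ed d → Ed d} {r : ι → ℝ} (hr : ∀ i, r i ∈ Set.Ioo (0:ℝ) 1)
    (hS : ∀ i x y, dist (S i x) (S i y) = r i * dist x y)
    {K : Set (Ed d)} (hKc : IsCompact K)
    (hSSC : ∀ i j, i ≠ j → Disjoint (S i '' K) (S j '' K))
    {p : ι → ℝ} {μ : Measure (Ed d)} [IsProbabilityMeasure μ]
    (hμ : μ = ∑ i, ENNReal.ofReal (p i) • μ.map (S i)) (hK1 : μ K = 1)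
    {A : Set (Ed d)} (hAc : IsCompact A) (hAK : A ⊆ K) (i : ι) :
    μ (S i '' A) = ENNReal.ofReal (p i) * μ A := by
  have hKcompl : μ Kᶜ = 0 := by
    rw [measure_compl hKc.isClosed.measurableSet (measure_ne_top μ K), hK1, measure_univ,
      tsub_self]
  have hnullout : ∀ E : Set (Ed d), μ E = μ (E ∩ K) := by
    intro E
    refine le_antisymm ?_ (measure_mono inter_subset_left)
    calc μ E ≤ μ (E ∩ K) + μ (E \ K) := measure_le_inter_add_diff μ E K
      _ ≤ μ (E ∩ K) + μ Kᶜ := by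
          gcongr
          exact diff_subset_compl E K
      _ = μ (E ∩ K) := by rw [hKcompl, add_zero]
  have hinj : Function.Injective (S i) := by
    intro a b hab
    have h1 := hS i a b
    rw [hab, dist_self] at h1
    have h2 : dist a b = 0 := by
      rcases mul_eq_zero.1 h1.symm with h | h
      · exact absurd h (hr i).1.ne'
      · exact h
    exact dist_eq_zero.1 h2
  have him : MeasurableSet (S i '' A) :=
    (hAc.image (S_lipschitz hr hS i).continuous).isClosed.measurableSet
  rw [mu_apply_eq hr hS hμ him, Finset.sum_eq_single i]
  · rw [Set.preimage_image_eq A hinj]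
  · intro j _ hji
    have hempty : S j ⁻¹' (S i '' A) ∩ K = ∅ := by
      ext z
      simp only [mem_inter_iff, mem_preimage, mem_empty_iff_false, iff_false, not_and]
      rintro ⟨a, ha, haz⟩ hzK
      have h1 : S j z ∈ S i '' K := ⟨a, hAK ha, haz⟩
      have h2 : S j z ∈ S j '' K := mem_image_of_mem _ hzK
      exact absurd rfl ((hSSC i j hji.symm).ne_of_mem h1 h2)
    rw [hnullout (S j ⁻¹' (S i '' A)), hempty, measure_empty, mul_zero]
  · intro h; exact absurd (Finset.mem_univ i) h

lemma Sword_image_subset {S : ι → Ed d → Ed d} {K : Set (Ed d)}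
    (hKinv : K = ⋃ i, S i '' K) (u : List ι) : Sword S u '' K ⊆ K := by
  induction u with
  | nil => intro y hy; obtain ⟨z, hz, rfl⟩ := hy; exact hz
  | cons a u ih =>
    intro y hy
    obtain ⟨z, hz, rfl⟩ := hy
    have : S a (Sword S u z) ∈ S a '' K := mem_image_of_mem _ (ih (mem_image_of_mem _ hz))
    rw [hKinv]
    exact mem_iUnion.2 ⟨a, this⟩

lemma mu_cyl {S : ι → Ed d → Ed d} {r : ι → ℝ} (hr : ∀ i, r i ∈ Set.Ioo (0:ℝ) 1)
    (hS : ∀ i x y, dist (S i x) (S i y) = r i * dist x y)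
    {K : Set (Ed d)} (hKc : IsCompact K) (hKinv : K = ⋃ i, S i '' K)
    (hSSC : ∀ i j, i ≠ j → Disjoint (S i '' K) (S j '' K))
    {p : ι → ℝ} (hp : ∀ i, 0 ≤ p i) {μ : Measure (Ed d)} [IsProbabilityMeasure μ]
    (hμ : μ = ∑ i, ENNReal.ofReal (p i) • μ.map (S i)) (hK1 : μ K = 1)
    (u : List ι) : μ (Sword S u '' K) = ENNReal.ofReal (wprod p u) := by
  induction u with
  | nil => simp [show Sword S [] = id from rfl, wprod, hK1]
  | cons a u ih =>
    have h1 : Sword S (a :: u) '' K = S a '' (Sword S u '' K) := by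
      rw [← image_comp]; rfl
    have h2 : IsCompact (Sword S u '' K) := by
      clear ih h1
      induction u with
      | nil => simpa [show Sword S [] = id from rfl] using hKc
      | cons b u ih2 =>
        have : Sword S (b :: u) '' K = S b '' (Sword S u '' K) := by rw [← image_comp]; rfl
        rw [this]
        exact ih2.image (S_lipschitz hr hS b).continuous
    rw [h1, mu_image_eq hr hS hKc hSSC hμ hK1 h2 (Sword_image_subset hKinv u) a, ih,
      wprod_cons, ENNReal.ofReal_mul (hp a)]

lemma S_inj {S : ι → Ed d → Ed d} {r : ι → ℝ} (hr : ∀ i, r i ∈ Set.Ioo (0:ℝ) 1)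
    (hS : ∀ i x y, dist (S i x) (S i y) = r i * dist x y) (i : ι) :
    Function.Injective (S i) := by
  intro a b hab
  have h1 := hS i a b
  rw [hab, dist_self] at h1
  rcases mul_eq_zero.1 h1.symm with h | h
  · exact absurd h (hr i).1.ne'
  · exact dist_eq_zero.1 h

lemma sep_lemma {S : ι → Ed d → Ed d} {r : ι → ℝ} (hr : ∀ i, r i ∈ Set.Ioo (0:ℝ) 1)
    (hS : ∀ i x y, dist (S i x) (S i y) = r i * dist x y)
    {K : Set (Ed d)} (hKinv : K = ⋃ i, S i '' K)
    {δ0 : ℝ} (hδpos : 0 < δ0)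
    (hδ : ∀ i j, i ≠ j → ∀ a ∈ S i '' K, ∀ b ∈ S j '' K, δ0 ≤ dist a b) :
    ∀ (n : ℕ) (γ : ℕ → ι) (x : Ed d),
      (∀ m, x ∈ Sword S ((List.range m).map γ) '' K) →
      ∀ y ∈ K, dist y x < δ0 * wprod r ((List.range n).map γ) →
      y ∈ Sword S ((List.range n).map γ) '' K := by
  intro n
  induction n with
  | zero => intro γ x hx y hy _; simpa [Sword] using hy
  | succ n ih =>
    intro γ x hx y hy hd
    have hword : ∀ m, (List.range (m+1)).map γ = γ 0 :: (List.range m).map (γ ∘ Nat.succ) := by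
      intro m
      rw [List.range_succ_eq_map, List.map_cons, List.map_map]
    have hx1 : x ∈ S (γ 0) '' K := by
      have h := hx 1
      rw [hword 0] at h
      simpa [Sword] using h
    obtain ⟨x', hx'K, hx'⟩ := hx1
    have hx'm : ∀ m, x' ∈ Sword S ((List.range m).map (γ ∘ Nat.succ)) '' K := by
      intro m
      have h := hx (m+1)
      rw [hword m] at h
      obtain ⟨z, hz, hzx⟩ := h
      rw [Sword_cons] at hzx
      have heq : Sword S ((List.range m).map (γ ∘ Nat.succ)) z = x' :=
        S_inj hr hS (γ 0) (by rw [hzx, hx'])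
      exact heq ▸ mem_image_of_mem _ hz
    rw [hword n, wprod_cons] at hd
    set v := (List.range n).map (γ ∘ Nat.succ) with hv
    have hw1 : wprod r v ≤ 1 :=
      wprod_le_one (fun i => (hr i).1.le) (fun i => (hr i).2.le) v
    have hw0 : 0 < wprod r v := wprod_pos (fun i => (hr i).1) v
    have hyγ0 : y ∈ S (γ 0) '' K := by
      have hyK := hy
      rw [hKinv] at hyK
      obtain ⟨j, hj⟩ := mem_iUnion.1 hyK
      by_cases hjγ : j = γ 0
      · rwa [hjγ] at hj
      · exfalso
        have h1 := hδ j (γ 0) hjγ y hj x ⟨x', hx'K, hx'⟩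
        have h2 : r (γ 0) * wprod r v ≤ 1 :=
          mul_le_one₀ (hr (γ 0)).2.le hw0.le hw1
        nlinarith
    obtain ⟨y', hy'K, hy'⟩ := hyγ0
    have hdist : dist y' x' < δ0 * wprod r v := by
      have h3 : dist y x = r (γ 0) * dist y' x' := by rw [← hx', ← hy', hS]
      rw [h3] at hd
      have h4 : r (γ 0) * dist y' x' < r (γ 0) * (δ0 * wprod r v) := by
        rw [show δ0 * (r (γ 0) * wprod r v) = r (γ 0) * (δ0 * wprod r v) by ring] at hd
        exact hd
      exact lt_of_mul_lt_mul_left h4 (hr (γ 0)).1.le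
    have hfin := ih (γ ∘ Nat.succ) x' hx'm y' hy'K hdist
    obtain ⟨z, hz, hzy'⟩ := hfin
    rw [hword n]
    exact ⟨z, hz, by rw [Sword_cons, ← hv, hzy', hy']⟩


lemma tendsto_ratio (F G : ℕ → ℝ) (H χ c : ℝ)
    (hF : Tendsto (fun n : ℕ => F n / n) atTop (𝓝 H))
    (hG : Tendsto (fun n : ℕ => G n / n) atTop (𝓝 χ)) (hχ : χ ≠ 0) (K1 : ℕ) :
    Tendsto (fun n : ℕ => F (n + K1) / (G n - c)) atTop (𝓝 (H / χ)) := by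
  have h1 : Tendsto (fun n : ℕ => F (n + K1) / ((n + K1 : ℕ) : ℝ)) atTop (𝓝 H) :=
    hF.comp (tendsto_add_atTop_nat K1)
  have h2 : Tendsto (fun n : ℕ => ((n + K1 : ℕ) : ℝ) / (n : ℝ)) atTop (𝓝 1) := by
    have hb : Tendsto (fun n : ℕ => 1 + (K1 : ℝ) / (n : ℝ)) atTop (𝓝 1) := by
      simpa using tendsto_const_nhds.add (tendsto_const_div_atTop_nhds_zero_nat (K1 : ℝ))
    apply hb.congr'
    filter_upwards [eventually_ge_atTop 1] with n hn
    have hn0 : (n : ℝ) ≠ 0 := by positivity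
    push_cast
    field_simp
  have h3 : Tendsto (fun n : ℕ => F (n + K1) / (n : ℝ)) atTop (𝓝 H) := by
    have := h1.mul h2
    rw [mul_one] at this
    apply this.congr'
    filter_upwards [eventually_ge_atTop 1] with n hn
    have hn0 : ((n + K1 : ℕ) : ℝ) ≠ 0 := by positivity
    field_simp
  have h4 : Tendsto (fun n : ℕ => (G n - c) / (n : ℝ)) atTop (𝓝 χ) := by
    have := hG.sub (tendsto_const_div_atTop_nhds_zero_nat c)
    rw [sub_zero] at this
    apply this.congr'
    filter_upwards [] with n
    rw [sub_div]
  have h5 := h3.div h4 hχ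
  apply h5.congr'
  filter_upwards [eventually_ge_atTop 1] with n hn
  have hn0 : (n : ℝ) ≠ 0 := by positivity
  exact (div_div_div_cancel_right₀ hn0 _ _)

end Meas

/-- under the SSC, if `γ ∈ Ω_w` then the local dimension of `μ_p`
at `π(γ)` exists and equals `H(w,p)/χ(w)`. Here `x = π(γ)` is characterized by
membership in `S_{γ|n}(K)` for every `n`. -/
theorem stmt_1 {d : ℕ} (hd : 1 ≤ d) {ι : Type} [Fintype ι] [Nonempty ι]
    (S : ι → Ed d → Ed d) (r : ι → ℝ) (hr : ∀ i, r i ∈ Set.Ioo (0:ℝ) 1)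
    (hS : ∀ i x y, dist (S i x) (S i y) = r i * dist x y)
    (K : Set (Ed d)) (hKc : IsCompact K) (hKne : K.Nonempty)
    (hKinv : K = ⋃ i, S i '' K)
    (hSSC : ∀ i j, i ≠ j → Disjoint (S i '' K) (S j '' K))
    (p : ι → ℝ) (hp : ∀ i, 0 < p i) (hp1 : ∑ i, p i = 1)
    (μ : Measure (Ed d)) [IsProbabilityMeasure μ]
    (hμ : μ = ∑ i, ENNReal.ofReal (p i) • μ.map (S i))
    (w : ι → ℝ) (hw : w ∈ probSet ι)
    (γ : ℕ → ι)
    (hγ : ∀ j : ι, Tendsto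
      (fun n : ℕ => (((Finset.range n).filter (fun ℓ => γ ℓ = j)).card : ℝ) / n)
      atTop (nhds (w j)))
    (x : Ed d) (hx : ∀ n : ℕ, x ∈ Sword S ((List.range n).map γ) '' K) :
    HasLocDim μ x (crossEnt w p / lyap r w) := by
  obtain ⟨hw0, hw1⟩ := hw
  have hp0 : ∀ i, 0 ≤ p i := fun i => (hp i).le
  have hple1 : ∀ i, p i ≤ 1 := fun i =>
    hp1 ▸ Finset.single_le_sum (fun j _ => (hp j).le) (Finset.mem_univ i)
  have hrle1 : ∀ i, r i ≤ 1 := fun i => (hr i).2.le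
  set u : ℕ → List ι := fun n => (List.range n).map γ with hu
  have hK1 : μ K = 1 := mu_K_eq_one hr hS hKc hKne hKinv hp0 hp1 hμ
  -- separation constant δ0
  have hpair : ∀ q : ι × ι, ∃ δ : ℝ, 0 < δ ∧
      (q.1 ≠ q.2 → ∀ a ∈ S q.1 '' K, ∀ b ∈ S q.2 '' K, δ ≤ dist a b) := by
    rintro ⟨i, j⟩
    by_cases hij : i = j
    · exact ⟨1, one_pos, fun h => absurd hij h⟩
    · obtain ⟨δ, hδpos, hdisj⟩ := (hSSC i j hij).exists_thickenings
        (hKc.image (S_lipschitz hr hS i).continuous)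
        (hKc.image (S_lipschitz hr hS j).continuous).isClosed
      refine ⟨δ, hδpos, fun _ a ha b hb => ?_⟩
      by_contra hlt
      push_neg at hlt
      have h1 : b ∈ thickening δ (S i '' K) :=
        mem_thickening_iff.2 ⟨a, ha, by rw [dist_comm]; exact hlt⟩
      have h2 : b ∈ thickening δ (S j '' K) := self_subset_thickening hδpos _ hb
      exact absurd rfl (hdisj.ne_of_mem h1 h2)
  choose δf hδfpos hδf using hpair
  set δ0 := Finset.univ.inf' Finset.univ_nonempty δf with hδ0def
  have hδ0pos : 0 < δ0 := by
    rw [hδ0def, Finset.lt_inf'_iff]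
    exact fun q _ => hδfpos q
  have hδ0 : ∀ i j, i ≠ j → ∀ a ∈ S i '' K, ∀ b ∈ S j '' K, δ0 ≤ dist a b :=
    fun i j hij a ha b hb =>
      le_trans (Finset.inf'_le _ (Finset.mem_univ (i, j))) (hδf (i, j) hij a ha b hb)
  -- rmax, rmin
  obtain ⟨imax, -, himax⟩ := Finset.exists_max_image Finset.univ r
    ⟨Classical.arbitrary ι, Finset.mem_univ _⟩
  obtain ⟨imin, -, himin⟩ := Finset.exists_min_image Finset.univ r
    ⟨Classical.arbitrary ι, Finset.mem_univ _⟩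
  set rmax := r imax with hrmaxdef
  set rmin := r imin with hrmindef
  have hrmax : ∀ i, r i ≤ rmax := fun i => himax i (Finset.mem_univ i)
  have hrmin : ∀ i, rmin ≤ r i := fun i => himin i (Finset.mem_univ i)
  have hrmax0 : 0 < rmax := (hr imax).1
  have hrmax1 : rmax < 1 := (hr imax).2
  have hrmin0 : 0 < rmin := (hr imin).1
  have hrmin1 : rmin ≤ 1 := (hr imin).2.le
  -- the constant k
  have hdiam1 : (0:ℝ) < diam K + 1 := by linarith [diam_nonneg (s := K)]
  obtain ⟨k, hk⟩ := exists_pow_lt_of_lt_one (div_pos hδ0pos hdiam1) hrmax1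
  have hkD : diam K * rmax ^ k < δ0 := by
    rw [lt_div_iff₀ hdiam1] at hk
    nlinarith [pow_nonneg hrmax0.le k, diam_nonneg (s := K)]
  set K1 := k + 1 with hK1def
  -- wprod facts
  have hwr_succ : ∀ n, wprod r (u (n+1)) = wprod r (u n) * r (γ n) := wprod_range_succ r γ
  have hwr_pos : ∀ n, 0 < wprod r (u n) := fun n => wprod_pos (fun i => (hr i).1) _
  have hwp_pos : ∀ n, 0 < wprod p (u n) := fun n => wprod_pos hp _
  have hwr_anti : Antitone (fun n => wprod r (u n)) :=
    antitone_nat_of_succ_le (fun n => by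
      rw [hwr_succ]
      exact mul_le_of_le_one_right (hwr_pos n).le (hrle1 _))
  have hwr_add : ∀ a b, wprod r (u (a + b)) ≤ wprod r (u a) * rmax ^ b := by
    intro a b
    induction b with
    | zero => simp
    | succ b ih =>
      have hstep : a + (b + 1) = (a + b) + 1 := by omega
      rw [hstep, hwr_succ, pow_succ]
      calc wprod r (u (a + b)) * r (γ (a + b))
          ≤ (wprod r (u a) * rmax ^ b) * rmax :=
            mul_le_mul ih (hrmax _) (hr _).1.le (mul_nonneg (hwr_pos a).le (pow_nonneg hrmax0.le b))
        _ = wprod r (u a) * (rmax ^ b * rmax) := by ring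
  -- Lp, Lr
  set Lp : ℕ → ℝ := fun n => ∑ ℓ ∈ Finset.range n, Real.log (1 / p (γ ℓ)) with hLpdef
  set Lr : ℕ → ℝ := fun n => ∑ ℓ ∈ Finset.range n, Real.log (1 / r (γ ℓ)) with hLrdef
  have hlogp : ∀ n, Real.log (wprod p (u n)) = -Lp n := by
    intro n
    rw [hu, log_wprod_range hp γ n, hLpdef]
    simp [one_div, Real.log_inv]
  have hlogr : ∀ n, Real.log (wprod r (u n)) = -Lr n := by
    intro n
    rw [hu, log_wprod_range (fun i => (hr i).1) γ n, hLrdef]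
    simp [one_div, Real.log_inv]
  have hLp_nonneg : ∀ n, 0 ≤ Lp n := by
    intro n
    refine Finset.sum_nonneg fun ℓ _ => ?_
    rw [one_div, Real.log_inv]
    have := Real.log_nonpos (hp _).le (hple1 (γ ℓ))
    linarith
  have hLr_ge : ∀ n : ℕ, (n : ℝ) * Real.log (1 / rmax) ≤ Lr n := by
    intro n
    have : (n : ℝ) * Real.log (1 / rmax) = ∑ _ℓ ∈ Finset.range n, Real.log (1 / rmax) := by
      rw [Finset.sum_const, Finset.card_range, nsmul_eq_mul]
    rw [this]
    refine Finset.sum_le_sum fun ℓ _ => ?_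
    have h1 : 1 / rmax ≤ 1 / r (γ ℓ) := one_div_le_one_div_of_le (hr _).1 (hrmax _)
    exact Real.log_le_log (by positivity) h1
  have hlogrmax : 0 < Real.log (1 / rmax) := by
    apply Real.log_pos
    rw [lt_div_iff₀ hrmax0]
    linarith
  have hLr_top : Tendsto Lr atTop atTop := by
    apply tendsto_atTop_mono hLr_ge
    exact (tendsto_natCast_atTop_atTop).atTop_mul_const hlogrmax
  -- positivity of lyapunov exponent
  have hχpos : 0 < lyap r w := by
    obtain ⟨i, hi⟩ : ∃ i, 0 < w i := by
      by_contra h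
      push_neg at h
      have hz : ∑ i, w i = 0 := Finset.sum_eq_zero fun i _ => le_antisymm (h i) (hw0 i)
      rw [hw1] at hz
      norm_num at hz
    refine Finset.sum_pos' (fun j _ => mul_nonneg (hw0 j) ?_) ⟨i, Finset.mem_univ i, ?_⟩
    · apply Real.log_nonneg
      rw [le_div_iff₀ (hr j).1]
      linarith [(hr j).2]
    · refine mul_pos hi (Real.log_pos ?_)
      rw [lt_div_iff₀ (hr i).1]
      linarith [(hr i).2]
  -- null outside K
  have hKcompl : μ Kᶜ = 0 := by
    rw [measure_compl hKc.isClosed.measurableSet (measure_ne_top μ K), hK1, measure_univ,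
      tsub_self]
  have hnullout : ∀ E : Set (Ed d), μ E = μ (E ∩ K) := by
    intro E
    refine le_antisymm ?_ (measure_mono inter_subset_left)
    calc μ E ≤ μ (E ∩ K) + μ (E \ K) := measure_le_inter_add_diff μ E K
      _ ≤ μ (E ∩ K) + μ Kᶜ := by
          gcongr
          exact diff_subset_compl E K
      _ = μ (E ∩ K) := by rw [hKcompl, add_zero]
  have hcylμ : ∀ n, μ (Sword S (u n) '' K) = ENNReal.ofReal (wprod p (u n)) :=
    fun n => mu_cyl hr hS hKc hKinv hSSC hp0 hμ hK1 (u n)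
  -- measure bounds
  have hlow : ∀ m ρ, wprod r (u m) * diam K ≤ ρ →
      wprod p (u m) ≤ (μ (closedBall x ρ)).toReal := by
    intro m ρ hρ
    have hsub : Sword S (u m) '' K ⊆ closedBall x ρ := by
      rintro y ⟨a, ha, rfl⟩
      obtain ⟨b, hb, hbx⟩ := hx m
      rw [mem_closedBall, ← hbx, Sword_dist hS]
      refine le_trans ?_ hρ
      exact mul_le_mul_of_nonneg_left (dist_le_diam_of_mem hKc.isBounded ha hb) (hwr_pos m).le
    have h1 : ENNReal.ofReal (wprod p (u m)) ≤ μ (closedBall x ρ) := by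
      rw [← hcylμ m]
      exact measure_mono hsub
    exact (ENNReal.ofReal_le_iff_le_toReal (measure_ne_top μ _)).1 h1
  have hup : ∀ n ρ, ρ < δ0 * wprod r (u n) →
      (μ (closedBall x ρ)).toReal ≤ wprod p (u n) := by
    intro n ρ hρ
    have hsub : closedBall x ρ ∩ K ⊆ Sword S (u n) '' K := by
      rintro y ⟨hyB, hyK⟩
      exact sep_lemma hr hS hKinv hδ0pos hδ0 n γ x hx y hyK
        (lt_of_le_of_lt (mem_closedBall.1 hyB) hρ)
    have h1 : μ (closedBall x ρ) ≤ ENNReal.ofReal (wprod p (u n)) := by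
      rw [hnullout (closedBall x ρ), ← hcylμ n]
      exact measure_mono hsub
    exact ENNReal.toReal_le_of_le_ofReal (hwp_pos n).le h1
  -- the index function
  have hex : ∀ ρ : ℝ, ∃ n, 0 < ρ → δ0 * wprod r (u n) ≤ ρ := by
    intro ρ
    by_cases hρ : 0 < ρ
    · obtain ⟨n, hn⟩ := exists_pow_lt_of_lt_one (div_pos hρ hδ0pos) hrmax1
      refine ⟨n, fun _ => le_of_lt ?_⟩
      have h1 : wprod r (u n) ≤ rmax ^ n := by
        have h2 := wprod_le_pow (fun i => (hr i).1.le) hrmax hrmax0.le (u n)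
        rwa [hu, List.length_map, List.length_range] at h2
      calc δ0 * wprod r (u n) ≤ δ0 * rmax ^ n := mul_le_mul_of_nonneg_left h1 hδ0pos.le
        _ < δ0 * (ρ / δ0) := mul_lt_mul_of_pos_left hn hδ0pos
        _ = ρ := by field_simp
    · exact ⟨0, fun h => absurd h hρ⟩
  set nρ : ℝ → ℕ := fun ρ => Nat.find (hex ρ) - 1 with hnρdef
  have hfind_ge : ∀ ρ : ℝ, 0 < ρ → ρ < δ0 → 1 ≤ Nat.find (hex ρ) := by
    intro ρ h0 h1
    rcases Nat.eq_zero_or_pos (Nat.find (hex ρ)) with h | h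
    · exfalso
      have h2 := Nat.find_spec (hex ρ)
      rw [h] at h2
      have h3 := h2 h0
      simp only [hu] at h3
      rw [show (List.range 0).map γ = [] from rfl, wprod_nil, mul_one] at h3
      linarith
    · exact h
  have hkey : ∀ ρ : ℝ, 0 < ρ → ρ < δ0 →
      δ0 * wprod r (u (nρ ρ + 1)) ≤ ρ ∧ ρ < δ0 * wprod r (u (nρ ρ)) := by
    intro ρ h0 h1
    have h2 := hfind_ge ρ h0 h1
    constructor
    · have h3 : nρ ρ + 1 = Nat.find (hex ρ) := by
        simp only [hnρdef]; omega
      rw [h3]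
      exact Nat.find_spec (hex ρ) h0
    · have h3 : nρ ρ < Nat.find (hex ρ) := by simp only [hnρdef]; omega
      have h4 := Nat.find_min (hex ρ) h3
      push_neg at h4
      exact h4.2
  have hntop : Tendsto nρ (𝓝[>] (0:ℝ)) atTop := by
    rw [Filter.tendsto_atTop]
    intro N
    have hev : Ioo (0:ℝ) (δ0 * wprod r (u (N+1))) ∈ 𝓝[>] (0:ℝ) :=
      Ioo_mem_nhdsGT_of_mem ⟨le_refl 0, mul_pos hδ0pos (hwr_pos _)⟩
    filter_upwards [hev] with ρ hρ
    obtain ⟨h0, h1⟩ := hρ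
    have h2 : N + 1 ≤ Nat.find (hex ρ) := by
      rw [Nat.le_find_iff]
      intro j hj hcon
      have h3 := hcon h0
      have h4 : wprod r (u (N+1)) ≤ wprod r (u j) := hwr_anti (by omega)
      have h5 : δ0 * wprod r (u (N+1)) ≤ δ0 * wprod r (u j) :=
        mul_le_mul_of_nonneg_left h4 hδ0pos.le
      linarith
    simp only [hnρdef]
    omega
  -- limits of the bounding sequences
  have hLpdiv : Tendsto (fun n : ℕ => Lp n / n) atTop (𝓝 (crossEnt w p)) := by
    have := freq_tendsto γ w hγ (fun i => Real.log (1 / p i))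
    simpa [hLpdef, crossEnt] using this
  have hLrdiv : Tendsto (fun n : ℕ => Lr n / n) atTop (𝓝 (lyap r w)) := by
    have := freq_tendsto γ w hγ (fun i => Real.log (1 / r i))
    simpa [hLrdef, lyap] using this
  have hglo : Tendsto (fun n : ℕ => Lp n / (Lr n - Real.log (δ0 * rmin))) atTop
      (𝓝 (crossEnt w p / lyap r w)) := by
    have := tendsto_ratio Lp Lr (crossEnt w p) (lyap r w) (Real.log (δ0 * rmin))
      hLpdiv hLrdiv hχpos.ne' 0
    simpa using this
  have hghi : Tendsto (fun n : ℕ => Lp (n + K1) / (Lr n - Real.log δ0)) atTop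
      (𝓝 (crossEnt w p / lyap r w)) :=
    tendsto_ratio Lp Lr (crossEnt w p) (lyap r w) (Real.log δ0) hLpdiv hLrdiv hχpos.ne' K1
  -- the squeeze
  have hmain : ∀ ρ : ℝ, 0 < ρ → ρ < δ0 → Real.log δ0 < Lr (nρ ρ) →
      Lp (nρ ρ) / (Lr (nρ ρ) - Real.log (δ0 * rmin))
        ≤ Real.log (μ (closedBall x ρ)).toReal / Real.log ρ
      ∧ Real.log (μ (closedBall x ρ)).toReal / Real.log ρ
        ≤ Lp (nρ ρ + K1) / (Lr (nρ ρ) - Real.log δ0) := by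
    intro ρ hρ0 hρδ hρLr
    obtain ⟨hA, hB⟩ := hkey ρ hρ0 hρδ
    set n := nρ ρ with hndef
    have hupN : (μ (closedBall x ρ)).toReal ≤ wprod p (u n) := hup n ρ hB
    have hlowN : wprod p (u (n + K1)) ≤ (μ (closedBall x ρ)).toReal := by
      apply hlow
      have h1 : wprod r (u (n + K1)) ≤ wprod r (u (n+1)) * rmax ^ k := by
        have h2 : n + K1 = (n+1) + k := by rw [hK1def]; omega
        rw [h2]
        exact hwr_add (n+1) k
      calc wprod r (u (n + K1)) * diam K
          ≤ (wprod r (u (n+1)) * rmax ^ k) * diam K :=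
            mul_le_mul_of_nonneg_right h1 diam_nonneg
        _ = wprod r (u (n+1)) * (diam K * rmax ^ k) := by ring
        _ ≤ wprod r (u (n+1)) * δ0 := mul_le_mul_of_nonneg_left hkD.le (hwr_pos _).le
        _ = δ0 * wprod r (u (n+1)) := mul_comm _ _
        _ ≤ ρ := hA
    have hμpos : 0 < (μ (closedBall x ρ)).toReal := lt_of_lt_of_le (hwp_pos _) hlowN
    have hlogup : Real.log (μ (closedBall x ρ)).toReal ≤ -Lp n := by
      rw [← hlogp n]
      exact Real.log_le_log hμpos hupN
    have hlogdown : -Lp (n + K1) ≤ Real.log (μ (closedBall x ρ)).toReal := by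
      rw [← hlogp (n + K1)]
      exact Real.log_le_log (hwp_pos _) hlowN
    have hlogρ_up : Real.log ρ ≤ Real.log δ0 - Lr n := by
      have h1 := Real.log_le_log hρ0 hB.le
      rw [Real.log_mul hδ0pos.ne' (hwr_pos n).ne', hlogr n] at h1
      linarith
    have hlogρ_lo : Real.log (δ0 * rmin) - Lr n ≤ Real.log ρ := by
      have h3 : wprod r (u n) * rmin ≤ wprod r (u (n+1)) := by
        rw [hwr_succ]
        exact mul_le_mul_of_nonneg_left (hrmin (γ n)) (hwr_pos n).le
      have h2 : δ0 * rmin * wprod r (u n) ≤ ρ := by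
        calc δ0 * rmin * wprod r (u n) = δ0 * (wprod r (u n) * rmin) := by ring
          _ ≤ δ0 * wprod r (u (n+1)) := mul_le_mul_of_nonneg_left h3 hδ0pos.le
          _ ≤ ρ := hA
      have h4 := Real.log_le_log (mul_pos (mul_pos hδ0pos hrmin0) (hwr_pos n)) h2
      rw [Real.log_mul (mul_pos hδ0pos hrmin0).ne' (hwr_pos n).ne', hlogr n] at h4
      linarith
    have hden_pos : 0 < Lr n - Real.log δ0 := by linarith
    have hb1 : Lr n - Real.log δ0 ≤ -Real.log ρ := by linarith
    have hb2 : -Real.log ρ ≤ Lr n - Real.log (δ0 * rmin) := by linarith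
    have hb_pos : 0 < -Real.log ρ := lt_of_lt_of_le hden_pos hb1
    have ha1 : Lp n ≤ -Real.log (μ (closedBall x ρ)).toReal := by linarith
    have ha2 : -Real.log (μ (closedBall x ρ)).toReal ≤ Lp (n + K1) := by linarith
    have hfeq : Real.log (μ (closedBall x ρ)).toReal / Real.log ρ
        = (-Real.log (μ (closedBall x ρ)).toReal) / (-Real.log ρ) := (neg_div_neg_eq _ _).symm
    constructor
    · rw [hfeq]
      calc Lp n / (Lr n - Real.log (δ0 * rmin)) ≤ Lp n / (-Real.log ρ) :=
            div_le_div_of_nonneg_left (hLp_nonneg n) hb_pos hb2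
        _ ≤ (-Real.log (μ (closedBall x ρ)).toReal) / (-Real.log ρ) :=
            (div_le_div_iff_of_pos_right hb_pos).2 ha1
    · rw [hfeq]
      calc (-Real.log (μ (closedBall x ρ)).toReal) / (-Real.log ρ)
          ≤ Lp (n + K1) / (-Real.log ρ) := (div_le_div_iff_of_pos_right hb_pos).2 ha2
        _ ≤ Lp (n + K1) / (Lr n - Real.log δ0) :=
            div_le_div_of_nonneg_left (by linarith [hLp_nonneg n]) hden_pos hb1
  show Tendsto _ (𝓝[>] (0:ℝ)) _
  refine tendsto_of_tendsto_of_tendsto_of_le_of_le' (hglo.comp hntop) (hghi.comp hntop) ?_ ?_ <;>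
  · filter_upwards [Ioo_mem_nhdsGT_of_mem (⟨le_refl 0, hδ0pos⟩ : (0:ℝ) ∈ Ico 0 δ0),
      hntop.eventually (hLr_top.eventually_gt_atTop (Real.log δ0))] with ρ h1 h2
    first
    | exact (hmain ρ h1.1 h1.2 h2).1
    | exact (hmain ρ h1.1 h1.2 h2).2
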